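/- Let s be an alternating play on an arena that is both P-visible and O-visible, containing a move s_j pointing to an earlier move s_i such that no later move points to s_j. Then no move of s occurring after s_j points to any move in the segment s_i ... s_j. -/

import Mathlib

set_option autoImplicit false

/-- Immediate causality `a ⋗ b` for a relation `le`. -/
def immOf {α : Type} (le : α → α → Prop) (a b : α) : Prop :=
  le a b ∧ a ≠ b ∧ ∀ c, le a c → le c b → c = a ∨ c = b

/-- Configurations: finite, down-closed, consistent sets. -/
def ConfigOf {α : Type} (le conflict : α → α → Prop) (x : Set α) : Prop :=
  x.Finite ∧ (∀ e ∈ x, ∀ e', le e' e → e' ∈ x) ∧ ∀ e ∈ x, ∀ e' ∈ x, ¬ conflict e e'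

/-- Minimality for a causal dependency relation. -/
def MinimalOf {α : Type} (le : α → α → Prop) (a : α) : Prop := ∀ a', le a' a → a' = a

/-- An arena: an event structure with polarities (`true` = Player `+`,
`false` = Opponent `−`) which is alternating, forestial and race-free. -/
structure Arena (α : Type) where
  le : α → α → Prop
  conflict : α → α → Prop
  pol : α → Bool
  le_refl : ∀ e, le e e
  le_trans : ∀ {a b c : α}, le a b → le b c → le a c
  le_antisymm : ∀ {a b : α}, le a b → le b a → a = b
  finite_causes : ∀ e : α, Set.Finite {e' | le e' e}
  conflict_irrefl : ∀ e, ¬ conflict e e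
  conflict_symm : ∀ {a b : α}, conflict a b → conflict b a
  conflict_inherit : ∀ {a b b' : α}, conflict a b → le b b' → conflict a b'
  alternating : ∀ {a b : α}, immOf le a b → pol a ≠ pol b
  forestial : ∀ {a1 a2 a : α}, le a1 a → le a2 a → le a1 a2 ∨ le a2 a1
  race_free : ∀ {a1 a2 : α}, conflict a1 a2 →
    (∀ a1' a2', le a1' a1 → le a2' a2 → conflict a1' a2' → a1' = a1 ∧ a2' = a2) →
    pol a1 = pol a2

/-- An alternating play: valid, non-repetitive, alternating, negative start. -/
def AltPlayOf {α : Type} (le conflict : α → α → Prop) (pol : α → Bool) (s : List α) : Prop :=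
  (∀ t, t <+: s → ConfigOf le conflict {a | a ∈ t}) ∧
  s.Nodup ∧
  (∀ (i : ℕ) (a b : α), s[i]? = some a → s[i + 1]? = some b → pol a ≠ pol b) ∧
  (∀ a : α, s[0]? = some a → pol a = false)

/-- The P-view relation: `PViewRelOf le pol s v` holds when `v = ⌈s⌉`, following
the inductive clauses `⌈ε⌉ = ε`, `⌈s a⁺⌉ = ⌈s⌉ a⁺`, `⌈s a1⁺ s' a2⁻⌉ = ⌈s⌉ a1 a2`
when `a1 ⋗ a2`, and `⌈t a2⁻⌉ = a2` when `a2` is negative minimal. -/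
inductive PViewRelOf {α : Type} (le : α → α → Prop) (pol : α → Bool) :
    List α → List α → Prop
  | nil : PViewRelOf le pol [] []
  | pos {s v : List α} {a : α} : pol a = true → PViewRelOf le pol s v →
      PViewRelOf le pol (s ++ [a]) (v ++ [a])
  | negMin {t : List α} {a : α} : pol a = false → MinimalOf le a →
      PViewRelOf le pol (t ++ [a]) [a]
  | neg {s s' v : List α} {a1 a2 : α} : pol a1 = true → pol a2 = false →
      immOf le a1 a2 → PViewRelOf le pol (s ++ [a1]) v →
      PViewRelOf le pol (s ++ a1 :: s' ++ [a2]) (v ++ [a2])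

/-- The O-view relation, dual to the P-view: Opponent moves extend the view and
positive moves reset it to their justifier's view. -/
inductive OViewRelOf {α : Type} (le : α → α → Prop) (pol : α → Bool) :
    List α → List α → Prop
  | nil : OViewRelOf le pol [] []
  | neg {s v : List α} {a : α} : pol a = false → OViewRelOf le pol s v →
      OViewRelOf le pol (s ++ [a]) (v ++ [a])
  | pos {s s' v : List α} {a1 a2 : α} : pol a1 = false → pol a2 = true →
      immOf le a1 a2 → OViewRelOf le pol (s ++ [a1]) v →
      OViewRelOf le pol (s ++ a1 :: s' ++ [a2]) (v ++ [a2])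

/-- A play is P-visible when the P-views of all its prefixes are plays. -/
def PVisiblePlay {α : Type} (A : Arena α) (s : List α) : Prop :=
  ∀ t v : List α, t <+: s → PViewRelOf A.le A.pol t v →
    AltPlayOf A.le A.conflict A.pol v

/-- A play is O-visible when the O-views of all its prefixes are plays. -/
def OVisiblePlay {α : Type} (A : Arena α) (s : List α) : Prop :=
  ∀ t v : List α, t <+: s → OViewRelOf A.le A.pol t v →
    AltPlayOf A.le A.conflict A.pol v


namespace SegAux

variable {α : Type}

lemma prefix_getElem? {u s : List α} (h : u <+: s) {q : ℕ} (hq : q < u.length) :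
    s[q]? = u[q]? := by
  obtain ⟨r, rfl⟩ := h
  rw [List.getElem?_append, if_pos hq]

lemma take_succ_eq {s : List α} {m : ℕ} {x : α} (hx : s[m]? = some x) :
    s.take (m+1) = s.take m ++ [x] := by
  rw [List.take_succ, hx]; rfl

lemma nodup_pos_eq {s : List α} (hnd : s.Nodup) {q l : ℕ} {a : α}
    (hq : s[q]? = some a) (hl : s[l]? = some a) : q = l := by
  have hql : q < s.length := by
    by_contra h
    rw [List.getElem?_eq_none (Nat.le_of_not_lt h)] at hq; cases hq
  exact (List.getElem?_inj hql hnd).mp (hq.trans hl.symm)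

lemma mem_take_pos {s : List α} {n : ℕ} {a : α} (h : a ∈ s.take n) :
    ∃ q < n, s[q]? = some a := by
  obtain ⟨q, hq, he⟩ := List.getElem_of_mem h
  have hqn : q < n := lt_of_lt_of_le hq (by simp)
  refine ⟨q, hqn, ?_⟩
  have := prefix_getElem? (List.take_prefix n s) hq
  rw [this, List.getElem?_eq_getElem hq, he]

lemma mid_pos {u r s : List α} {a : α} (h : u ++ a :: r <+: s) :
    s[u.length]? = some a := by
  have hlt : u.length < (u ++ a :: r).length := by simp
  rw [prefix_getElem? h hlt, List.getElem?_append, if_neg (lt_irrefl _)]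
  simp

lemma prefix_eq_take {u s : List α} (h : u <+: s) : u = s.take u.length :=
  List.prefix_iff_eq_take.mp h

lemma last_of_take {s : List α} {m : ℕ} {x a : α} {u : List α}
    (hx : s[m]? = some x) (he : s.take (m+1) = u ++ [a]) :
    a = x ∧ u = s.take m := by
  rw [take_succ_eq hx] at he
  have hl : u.length = (s.take m).length := by
    have := congrArg List.length he
    simpa using this.symm
  obtain ⟨h1, h2⟩ := List.append_inj he hl.symm
  exact ⟨by simpa using h2.symm, h1.symm⟩

lemma getElem?_lt_length {s : List α} {m : ℕ} {x : α} (hx : s[m]? = some x) :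
    m < s.length := by
  by_contra h
  rw [List.getElem?_eq_none (Nat.le_of_not_lt h)] at hx; cases hx

lemma finset_top (le : α → α → Prop) (hrefl : ∀ e, le e e)
    (htrans : ∀ {a b c : α}, le a b → le b c → le a c) :
    ∀ F : Finset α, F.Nonempty → (∀ x ∈ F, ∀ y ∈ F, le x y ∨ le y x) →
      ∃ m ∈ F, ∀ x ∈ F, le x m := by
  classical
  intro F
  induction F using Finset.induction_on with
  | empty => intro h; exact absurd h (by simp)
  | @insert a F' ha ih =>
    intro _ htot
    rcases F'.eq_empty_or_nonempty with rfl | hne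
    · exact ⟨a, by simp, by simp [hrefl]⟩
    · obtain ⟨m, hmF, hm⟩ := ih hne (fun x hx y hy =>
        htot x (Finset.mem_insert_of_mem hx) y (Finset.mem_insert_of_mem hy))
      rcases htot a (Finset.mem_insert_self a F') m (Finset.mem_insert_of_mem hmF) with h | h
      · exact ⟨m, Finset.mem_insert_of_mem hmF, fun x hx => by
          rcases Finset.mem_insert.mp hx with rfl | hx
          · exact h
          · exact hm x hx⟩
      · exact ⟨a, Finset.mem_insert_self a F', fun x hx => by
          rcases Finset.mem_insert.mp hx with rfl | hx
          · exact hrefl x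
          · exact htrans (hm x hx) h⟩

lemma exists_imm (le : α → α → Prop) (hrefl : ∀ e, le e e)
    (htrans : ∀ {a b c : α}, le a b → le b c → le a c)
    (hanti : ∀ {a b : α}, le a b → le b a → a = b)
    (hfin : ∀ e : α, Set.Finite {e' | le e' e})
    (hforest : ∀ {a1 a2 a : α}, le a1 a → le a2 a → le a1 a2 ∨ le a2 a1)
    {b : α} (h : ¬ MinimalOf le b) : ∃ a, immOf le a b := by
  classical
  have hSfin : Set.Finite {e | le e b ∧ e ≠ b} := (hfin b).subset (fun x hx => hx.1)
  obtain ⟨a', ha'⟩ : ∃ a', le a' b ∧ a' ≠ b := by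
    unfold MinimalOf at h; push_neg at h; exact h
  have hne : hSfin.toFinset.Nonempty := ⟨a', by simp [Set.Finite.mem_toFinset]; exact ha'⟩
  obtain ⟨m, hmF, hm⟩ := finset_top le hrefl htrans hSfin.toFinset hne
    (fun x hx y hy => by
      rw [Set.Finite.mem_toFinset] at hx hy
      exact hforest hx.1 hy.1)
  rw [Set.Finite.mem_toFinset] at hmF
  refine ⟨m, hmF.1, hmF.2, fun c h1 h2 => ?_⟩
  by_cases hc : c = b
  · exact Or.inr hc
  · exact Or.inl (hanti (hm c (by rw [Set.Finite.mem_toFinset]; exact ⟨h2, hc⟩)) h1)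

lemma imm_unique {le : α → α → Prop}
    (hforest : ∀ {a1 a2 a : α}, le a1 a → le a2 a → le a1 a2 ∨ le a2 a1)
    {a a' b : α} (h : immOf le a b) (h' : immOf le a' b) : a = a' := by
  rcases hforest h.1 h'.1 with hle | hle
  · rcases h.2.2 a' hle h'.1 with he | he
    · exact he.symm
    · exact absurd he h'.2.1
  · rcases h'.2.2 a hle h.1 with he | he
    · exact he
    · exact absurd he h.2.1

lemma view_subset {le : α → α → Prop} {p : α → Bool} {t v : List α}
    (h : PViewRelOf le p t v) : ∀ x ∈ v, x ∈ t := by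
  induction h with
  | nil => simp
  | pos _ _ ih =>
    intro x hx
    rcases List.mem_append.mp hx with hx | hx
    · exact List.mem_append.mpr (Or.inl (ih x hx))
    · exact List.mem_append.mpr (Or.inr hx)
  | negMin _ _ => intro x hx; simp at hx; simp [hx]
  | neg _ _ _ _ ih =>
    intro x hx
    rcases List.mem_append.mp hx with hx | hx
    · have := ih x hx
      rcases List.mem_append.mp this with hx' | hx'
      · simp [hx']
      · simp at hx'; simp [hx']
    · simp at hx; simp [hx]

lemma toOView {le : α → α → Prop} {pol : α → Bool}
    (hneg : ∀ a : α, MinimalOf le a → pol a = false) :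
    ∀ {t v : List α}, PViewRelOf le (fun x => !pol x) t v → OViewRelOf le pol t v := by
  intro t v h
  induction h with
  | nil => exact .nil
  | pos hpa _ ih => exact .neg (by simpa using hpa) ih
  | negMin hpa hmin => exact absurd (hneg _ hmin) (by simpa using hpa)
  | neg h1 h2 himm _ ih => exact .pos (by simpa using h1) (by simpa using h2) himm ih

lemma view_exists {le conflict : α → α → Prop} (p : α → Bool)
    (hrefl : ∀ e, le e e)
    (htrans : ∀ {a b c : α}, le a b → le b c → le a c)
    (hanti : ∀ {a b : α}, le a b → le b a → a = b)
    (hfin : ∀ e : α, Set.Finite {e' | le e' e})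
    (hforest : ∀ {a1 a2 a : α}, le a1 a → le a2 a → le a1 a2 ∨ le a2 a1)
    (haltp : ∀ {a b : α}, immOf le a b → p a ≠ p b)
    {s : List α} (hcfg : ∀ t, t <+: s → ConfigOf le conflict {a | a ∈ t}) :
    ∀ t, t <+: s → ∃ v, PViewRelOf le p t v := by
  suffices H : ∀ (n : ℕ) (t : List α), t.length ≤ n → t <+: s → ∃ v, PViewRelOf le p t v by
    intro t ht; exact H t.length t le_rfl ht
  intro n
  induction n with
  | zero =>
    intro t hlen _
    have ht : t = [] := List.length_eq_zero_iff.mp (Nat.le_zero.mp hlen)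
    subst ht
    exact ⟨[], .nil⟩
  | succ n ih =>
    intro t hlen ht
    rcases List.eq_nil_or_concat t with rfl | ⟨u, a, hc⟩
    · exact ⟨[], .nil⟩
    rw [List.concat_eq_append] at hc
    subst hc
    · have hulen : u.length ≤ n := by
        have := hlen; simp at this; omega
      by_cases hpa : p a = true
      · obtain ⟨v, hv⟩ := ih u hulen ((List.prefix_append u [a]).trans ht)
        exact ⟨v ++ [a], .pos hpa hv⟩
      · have hpa' : p a = false := by simpa using hpa
        by_cases hmin : MinimalOf le a
        · exact ⟨[a], .negMin hpa' hmin⟩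
        · obtain ⟨c, hc⟩ := exists_imm le hrefl htrans hanti hfin hforest hmin
          have hpc : p c = true := by
            have := haltp hc
            rw [hpa'] at this
            simpa using this
          have hct : c ∈ u ++ [a] := (hcfg _ ht).2.1 a (by simp) c hc.1
          have hcu : c ∈ u := by
            rcases List.mem_append.mp hct with h | h
            · exact h
            · simp at h; exact absurd h hc.2.1
          obtain ⟨u1, u2, rfl⟩ := List.append_of_mem hcu
          obtain ⟨v, hv⟩ := ih (u1 ++ [c]) (by simp at hulen ⊢; omega)
            (((u1 ++ [c]).prefix_append (u2 ++ [a])).trans (by simpa using ht) : _)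
          exact ⟨v ++ [a], PViewRelOf.neg (s' := u2) hpc hpa' hc hv⟩
lemma lemA {le : α → α → Prop} (p : α → Bool) {s : List α}
    (hnd : s.Nodup)
    (haltp : ∀ (m : ℕ) (a b : α), s[m]? = some a → s[m+1]? = some b → p a ≠ p b)
    (himmuniq : ∀ {x x' y : α}, immOf le x y → immOf le x' y → x = x')
    {i j k : ℕ} {si sj : α}
    (hi : s[i]? = some si) (hj : s[j]? = some sj)
    (hptr : immOf le si sj)
    (hks : k < s.length)
    (H : ∀ (m : ℕ) (b' : α), j < m → m < k → s[m]? = some b' →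
       ∀ (q : ℕ) (a' : α), s[q]? = some a' → i ≤ q → q ≤ j → ¬ immOf le a' b') :
    ∀ m : ℕ, j ≤ m → m < k → (j < m ∨ p sj = false) →
      ∀ V, PViewRelOf le p (s.take (m+1)) V →
      ∀ (l' : ℕ) (a' : α), i ≤ l' → l' ≤ j → s[l']? = some a' → a' ∈ V →
      l' = j ∨ (l' = i ∧ p sj = false) := by
  intro m
  induction m using Nat.strong_induction_on with
  | _ m IH =>
  intro hjm hmk hcond V hV l' a' hil' hl'j hl' haV
  have hms : m < s.length := lt_trans hmk hks
  have hsm : s[m]? = some s[m] := List.getElem?_eq_getElem hms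
  generalize hT : s.take (m+1) = T at hV
  cases hV with
  | nil =>
    have hlen := congrArg List.length hT
    rw [List.length_take] at hlen
    simp only [List.length_nil] at hlen
    omega
  | @pos u v a hpa hv =>
    obtain ⟨ha, hu⟩ := last_of_take hsm hT
    subst ha
    rcases Nat.lt_or_ge j m with hjlt | hge
    · -- m > j
      obtain ⟨n, rfl⟩ : ∃ n, m = n + 1 := ⟨m - 1, by omega⟩
      rw [hu] at hv
      rcases List.mem_append.mp haV with hav | hav
      · -- a' ∈ v : use IH at n
        have hcond' : j < n ∨ p sj = false := by
          rcases Nat.lt_or_ge j n with h | h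
          · exact Or.inl h
          · have hnj : n = j := by omega
            subst hnj
            have halt := haltp n sj (s[n+1]) hj hsm
            rw [hpa] at halt
            exact Or.inr (by simpa using halt)
        exact IH n (by omega) (by omega) (by omega) hcond' v hv l' a' hil' hl'j hl' hav
      · -- a' is the last move
        simp at hav
        subst hav
        have : l' = n + 1 := nodup_pos_eq hnd hl' hsm
        omega
    · -- m = j
      have hmj : m = j := by omega
      subst hmj
      have hsj : s[m] = sj := Option.some.inj (hsm.symm.trans hj)
      rw [hsj] at hpa
      rcases hcond with h | h
      · omega
      · simp [hpa] at h
  | @negMin t a hpa hmin =>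
    obtain ⟨ha, _⟩ := last_of_take hsm hT
    subst ha
    simp at haV
    subst haV
    have hlm : l' = m := nodup_pos_eq hnd hl' hsm
    have hmj : m = j := by omega
    subst hmj
    have hsj : s[m] = sj := Option.some.inj (hsm.symm.trans hj)
    rw [hsj] at hmin
    exact absurd (hmin si hptr.1) hptr.2.1
  | @neg u s' v a1 a2 hpa1 hpa2 himm hv =>
    have hT2 : s.take (m+1) = (u ++ a1 :: s') ++ [a2] := by simp [hT]
    obtain ⟨ha2, humid⟩ := last_of_take hsm hT2
    subst ha2
    have hpre : u ++ a1 :: (s' ++ [s[m]]) <+: s := by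
      have h0 := List.take_prefix (m+1) s
      rw [hT2] at h0
      simpa [List.append_assoc] using h0
    have hq : s[u.length]? = some a1 := mid_pos hpre
    have hqm : u.length < m := by
      have hlen := congrArg List.length humid
      simp at hlen
      omega
    have huq : u ++ [a1] = s.take (u.length + 1) := by
      have hpre2 : u ++ [a1] <+: s :=
        List.IsPrefix.trans ⟨s' ++ [s[m]], by simp⟩ hpre
      have := prefix_eq_take hpre2
      simpa using this
    rcases Nat.lt_or_ge j m with hjlt | hge
    · -- m > j
      have hqnotin : u.length < i ∨ j < u.length := by
        by_contra hcon
        push_neg at hcon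
        exact H m (s[m]) hjlt hmk hsm u.length a1 hq hcon.1 hcon.2 himm
      rcases List.mem_append.mp haV with hav | hav
      · rcases hqnotin with hlt | hgt
        · -- justifier before i : all view elements before i
          have : a' ∈ u ++ [a1] := view_subset hv a' hav
          rw [huq] at this
          obtain ⟨q', hq'lt, hq'⟩ := mem_take_pos this
          have : q' = l' := nodup_pos_eq hnd hq' hl'
          omega
        · -- justifier after j : recurse
          rw [huq] at hv
          exact IH u.length hqm (by omega) (by omega) (Or.inl hgt) v hv l' a' hil' hl'j hl' hav
      · simp at hav
        subst hav
        have : l' = m := nodup_pos_eq hnd hl' hsm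
        omega
    · -- m = j : base case, justifier of sj is si at position i
      have hmj : m = j := by omega
      subst hmj
      have hsj : s[m] = sj := Option.some.inj (hsm.symm.trans hj)
      rw [hsj] at himm hpa2
      have ha1 : a1 = si := himmuniq himm hptr
      have hqi : u.length = i := nodup_pos_eq hnd (ha1 ▸ hq) hi
      rcases List.mem_append.mp haV with hav | hav
      · have : a' ∈ u ++ [a1] := view_subset hv a' hav
        rw [huq, hqi] at this
        obtain ⟨q', hq'lt, hq'⟩ := mem_take_pos this
        have : q' = l' := nodup_pos_eq hnd hq' hl'
        exact Or.inr ⟨by omega, hpa2⟩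
      · simp at hav
        subst hav
        exact Or.inl (nodup_pos_eq hnd hl' hsm)
lemma finalStep {le conflict : α → α → Prop} (p : α → Bool)
    (hrefl : ∀ e, le e e)
    (htrans : ∀ {a b c : α}, le a b → le b c → le a c)
    (hanti : ∀ {a b : α}, le a b → le b a → a = b)
    (hfin : ∀ e : α, Set.Finite {e' | le e' e})
    (hforest : ∀ {a1 a2 a : α}, le a1 a → le a2 a → le a1 a2 ∨ le a2 a1)
    (harena : ∀ {a b : α}, immOf le a b → p a ≠ p b)
    {s : List α}
    (hcfg : ∀ t, t <+: s → ConfigOf le conflict {a | a ∈ t})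
    (hnd : s.Nodup)
    (haltp : ∀ (m : ℕ) (a b : α), s[m]? = some a → s[m+1]? = some b → p a ≠ p b)
    (Hdc : ∀ t v, t <+: s → PViewRelOf le p t v →
      ∀ e ∈ {x | x ∈ v}, ∀ e', le e' e → e' ∈ {x | x ∈ v})
    {i j k l : ℕ} {si sj b a : α}
    (hi : s[i]? = some si) (hj : s[j]? = some sj)
    (hptr : immOf le si sj)
    (H : ∀ (m : ℕ) (b' : α), j < m → m < k → s[m]? = some b' →
       ∀ (q : ℕ) (a' : α), s[q]? = some a' → i ≤ q → q ≤ j → ¬ immOf le a' b')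
    (hnoj : ¬ immOf le sj b)
    (hjk : j < k) (hil : i ≤ l) (hlj : l ≤ j)
    (hk : s[k]? = some b) (hl : s[l]? = some a)
    (hpb : p b = true) (himm : immOf le a b) : False := by
  have himmuniq : ∀ {x x' y : α}, immOf le x y → immOf le x' y → x = x' :=
    fun h h' => imm_unique (le := le) (fun h1 h2 => hforest h1 h2) h h'
  have hks : k < s.length := getElem?_lt_length hk
  obtain ⟨V, hV⟩ := view_exists p hrefl (fun h1 h2 => htrans h1 h2)
    (fun h1 h2 => hanti h1 h2) hfin (fun h1 h2 => hforest h1 h2)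
    (fun h => harena h) hcfg (s.take (k+1)) (List.take_prefix _ s)
  have hdc := Hdc _ V (List.take_prefix _ s) hV
  generalize hT : s.take (k+1) = T at hV
  cases hV with
  | nil =>
    have hlen := congrArg List.length hT
    rw [List.length_take] at hlen
    simp only [List.length_nil] at hlen
    omega
  | @pos u v a2 hpa hv =>
    obtain ⟨ha2, hu⟩ := last_of_take hk hT
    rw [ha2] at hpa hdc
    have haV : a ∈ v ++ [b] := hdc b (by simp) a himm.1
    have hav : a ∈ v := by
      rcases List.mem_append.mp haV with h | h
      · exact h
      · simp at h; exact absurd h himm.2.1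
    obtain ⟨n, rfl⟩ : ∃ n, k = n + 1 := ⟨k - 1, by omega⟩
    rw [hu] at hv
    have hcond : j < n ∨ p sj = false := by
      rcases Nat.lt_or_ge j n with h | h
      · exact Or.inl h
      · have hnj : n = j := by omega
        subst hnj
        have halt := haltp n sj b hj hk
        rw [hpb] at halt
        exact Or.inr (by simpa using halt)
    rcases lemA p hnd haltp himmuniq hi hj hptr hks H n (by omega) (by omega) hcond
        v hv l a hil hlj hl hav with rfl | ⟨rfl, hpsj⟩
    · have hasj : a = sj := Option.some.inj (hl.symm.trans hj)
      exact hnoj (hasj ▸ himm)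
    · have hasi : a = si := Option.some.inj (hl.symm.trans hi)
      have h1 := harena (hasi ▸ himm : immOf le si b)
      have h2 := harena hptr
      rw [hpb] at h1
      rw [hpsj] at h2
      have : p si = false := by simpa using h1
      rw [this] at h2
      exact h2 rfl
  | @negMin t a2 hpa hmin =>
    obtain ⟨ha2, _⟩ := last_of_take hk hT
    rw [ha2, hpb] at hpa
    exact Bool.noConfusion hpa
  | @neg u s' v a1 a2 hpa1 hpa2 himm2 hv =>
    have hT2 : s.take (k+1) = (u ++ a1 :: s') ++ [a2] := by simp [hT]
    obtain ⟨ha2, _⟩ := last_of_take hk hT2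
    rw [ha2, hpb] at hpa2
    exact Bool.noConfusion hpa2
end SegAux

/-- Segment lemma: in a P-visible and O-visible alternating play `s` on a negative
arena, if `s_j` points to `s_i` and no later move points to `s_j`, then no move of
`s` occurring after `s_j` points to any move in the segment `s_i ... s_j`. -/
theorem segment_lemma {α : Type} (A : Arena α)
    (hneg : ∀ a : α, MinimalOf A.le a → A.pol a = false)
    (s : List α) (hplay : AltPlayOf A.le A.conflict A.pol s)
    (hP : PVisiblePlay A s) (hO : OVisiblePlay A s)
    (i j : ℕ) (si sj : α) (hi : s[i]? = some si) (hj : s[j]? = some sj)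
    (hij : i < j) (hptr : immOf A.le si sj)
    (hnolater : ∀ (k : ℕ) (b : α), j < k → s[k]? = some b → ¬ immOf A.le sj b) :
    ∀ (k l : ℕ) (b a : α), j < k → i ≤ l → l ≤ j →
      s[k]? = some b → s[l]? = some a → ¬ immOf A.le a b := by

  have hnd : s.Nodup := hplay.2.1
  intro k
  induction k using Nat.strong_induction_on with
  | _ k IH =>
  intro l b a hjk hil hlj hk hl himm
  have H : ∀ (m : ℕ) (b' : α), j < m → m < k → s[m]? = some b' →
      ∀ (q : ℕ) (a' : α), s[q]? = some a' → i ≤ q → q ≤ j → ¬ immOf A.le a' b' :=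
    fun m b' h1 h2 hm q a' hq h3 h4 => IH m h2 q b' a' h1 h3 h4 hm hq
  have hnoj : ¬ immOf A.le sj b := hnolater k b hjk hk
  cases hpb : A.pol b with
  | true =>
    exact SegAux.finalStep A.pol A.le_refl (fun h1 h2 => A.le_trans h1 h2)
      (fun h1 h2 => A.le_antisymm h1 h2) A.finite_causes (fun h1 h2 => A.forestial h1 h2)
      (fun h => A.alternating h) hplay.1 hnd hplay.2.2.1
      (fun t v ht hv => ((hP t v ht hv).1 v (List.prefix_refl v)).2.1)
      hi hj hptr H hnoj hjk hil hlj hk hl hpb himm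
  | false =>
    exact SegAux.finalStep (fun x => !A.pol x) A.le_refl (fun h1 h2 => A.le_trans h1 h2)
      (fun h1 h2 => A.le_antisymm h1 h2) A.finite_causes (fun h1 h2 => A.forestial h1 h2)
      (fun h => by simpa using A.alternating h) hplay.1 hnd
      (fun m x y h1 h2 => by simpa using hplay.2.2.1 m x y h1 h2)
      (fun t v ht hv => ((hO t v ht (SegAux.toOView hneg hv)).1 v (List.prefix_refl v)).2.1)
      hi hj hptr H hnoj hjk hil hlj hk hl (by simp [hpb]) himm
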